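/- For all impartial games G, H, K, the games (G ∘ H) ∘ K and G ∘ (H + K) are equal (i.e., their disjunctive sum is a P-position). -/

import Mathlib

/-- Finite impartial games, given by their (finite list of) options. -/
inductive IGame : Type where
  | mk : List IGame → IGame

/-- The empty game `E`, with no options. -/
abbrev E : IGame := .mk []

/-- The list of options of a game. -/
def IGame.opts : IGame → List IGame
  | .mk l => l

theorem IGame.sizeOf_lt_of_mem {g : IGame} {l : List IGame} (h : g ∈ l) :
    sizeOf g < sizeOf (IGame.mk l) := by
  have := List.sizeOf_lt_of_mem h
  simp only [IGame.mk.sizeOf_spec]; omega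

/-- The pass operator: `E* = E`; for `G` with options, `G*` has options
`G` together with `g*` for each option `g` of `G`. -/
def pass : IGame → IGame
  | .mk [] => .mk []
  | .mk l => .mk (.mk l :: l.attach.map fun g => pass g.1)
decreasing_by
  exact IGame.sizeOf_lt_of_mem g.2

/-- The split sum `G ∘ H`. -/
def split : IGame → IGame → IGame
  | .mk [], _ => .mk []
  | .mk gs, .mk [] => .mk gs
  | .mk gs, .mk hs =>
      .mk ((hs.attach.map fun h => split (.mk gs) h.1) ++
           (gs.attach.map fun g => split g.1 (.mk hs)))
termination_by G H => sizeOf G + sizeOf H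
decreasing_by
  · have := IGame.sizeOf_lt_of_mem h.2; omega
  · have := IGame.sizeOf_lt_of_mem g.2; omega

/-- Disjunctive sum of games. -/
def addG : IGame → IGame → IGame
  | .mk gs, .mk hs =>
      .mk ((gs.attach.map fun g => addG g.1 (.mk hs)) ++
           (hs.attach.map fun h => addG (.mk gs) h.1))
termination_by G H => sizeOf G + sizeOf H
decreasing_by
  · have := IGame.sizeOf_lt_of_mem g.2; omega
  · have := IGame.sizeOf_lt_of_mem h.2; omega

/-- The nimber `*n`, with options `*0, …, *(n-1)`. -/
def star : ℕ → IGame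
  | n => .mk ((List.range n).attach.map fun k => star k.1)
termination_by n => n
decreasing_by have := List.mem_range.mp k.2; omega

/-- `G` is a P-position (previous player wins under normal play):
every option is an N-position. -/
def PPos : IGame → Prop
  | .mk l => ∀ g ∈ l.attach, ¬ PPos g.1
decreasing_by exact IGame.sizeOf_lt_of_mem g.2

/-- Identity of game trees (extensionally: same set of options, recursively). -/
def Ident : IGame → IGame → Prop
  | .mk gs, .mk hs =>
      (∀ g ∈ gs.attach, ∃ h ∈ hs.attach, Ident g.1 h.1) ∧
      (∀ h ∈ hs.attach, ∃ g ∈ gs.attach, Ident g.1 h.1)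
termination_by G H => sizeOf G + sizeOf H
decreasing_by
  · have := IGame.sizeOf_lt_of_mem g.2
    have := IGame.sizeOf_lt_of_mem h.2; omega
  · have := IGame.sizeOf_lt_of_mem g.2
    have := IGame.sizeOf_lt_of_mem h.2; omega

lemma PPos_iff (l : List IGame) : PPos (.mk l) ↔ ∀ g ∈ l, ¬ PPos g := by
  rw [PPos]
  constructor
  · intro h g hg; exact h ⟨g, hg⟩ (List.mem_attach _ _)
  · intro h g _; exact h g.1 g.2

lemma Ident_iff (gs hs : List IGame) : Ident (.mk gs) (.mk hs) ↔
    (∀ g ∈ gs, ∃ h ∈ hs, Ident g h) ∧ (∀ h ∈ hs, ∃ g ∈ gs, Ident g h) := by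
  rw [Ident]
  constructor
  · rintro ⟨h1, h2⟩
    constructor
    · intro g hg
      obtain ⟨h, _, hi⟩ := h1 ⟨g, hg⟩ (List.mem_attach _ _)
      exact ⟨h.1, h.2, hi⟩
    · intro h hh
      obtain ⟨g, _, hi⟩ := h2 ⟨h, hh⟩ (List.mem_attach _ _)
      exact ⟨g.1, g.2, hi⟩
  · rintro ⟨h1, h2⟩
    constructor
    · intro g _
      obtain ⟨h, hh, hi⟩ := h1 g.1 g.2
      exact ⟨⟨h, hh⟩, List.mem_attach _ _, hi⟩
    · intro h _
      obtain ⟨g, hg, hi⟩ := h2 h.1 h.2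
      exact ⟨⟨g, hg⟩, List.mem_attach _ _, hi⟩

lemma addG_def (gs hs : List IGame) : addG (.mk gs) (.mk hs) =
    .mk (gs.map (addG · (.mk hs)) ++ hs.map (addG (.mk gs))) := by
  rw [addG]
  simp [List.attach_map_val]

lemma split_nil (H : IGame) : split (.mk []) H = .mk [] := by
  rw [split]

lemma split_nil' (gs : List IGame) : split (.mk gs) (.mk []) = .mk gs := by
  cases gs with
  | nil => rw [split]
  | cons a as => rw [split] <;> simp

lemma split_E : ∀ X : IGame, split X (.mk []) = X
  | .mk xs => split_nil' xs

lemma split_def (a : IGame) (as : List IGame) (h : IGame) (hs : List IGame) :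
    split (.mk (a :: as)) (.mk (h :: hs)) =
    .mk ((h :: hs).map (split (.mk (a :: as))) ++ (a :: as).map (split · (.mk (h :: hs)))) := by
  rw [split] <;> simp [List.attach_map_val]

lemma Ident_refl : ∀ G : IGame, Ident G G
  | .mk l => by
    rw [Ident_iff]
    exact ⟨fun g hg => ⟨g, hg, Ident_refl g⟩, fun g hg => ⟨g, hg, Ident_refl g⟩⟩
termination_by G => sizeOf G
decreasing_by all_goals exact IGame.sizeOf_lt_of_mem hg

lemma Ident_symm : ∀ (G H : IGame), Ident G H → Ident H G
  | .mk gs, .mk hs, h => by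
    rw [Ident_iff] at h ⊢
    constructor
    · intro b hb
      obtain ⟨a, ha, hi⟩ := h.2 b hb
      exact ⟨a, ha, Ident_symm _ _ hi⟩
    · intro a ha
      obtain ⟨b, hb, hi⟩ := h.1 a ha
      exact ⟨b, hb, Ident_symm _ _ hi⟩
termination_by G H => sizeOf G + sizeOf H
decreasing_by
  · have := IGame.sizeOf_lt_of_mem ha
    have := IGame.sizeOf_lt_of_mem hb; omega
  · have := IGame.sizeOf_lt_of_mem ha
    have := IGame.sizeOf_lt_of_mem hb; omega

lemma Ident_split : ∀ (G G' H H' : IGame), Ident G G' → Ident H H' →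
    Ident (split G H) (split G' H')
  | .mk [], .mk [], _, _, _, _ => by
      rw [split_nil, split_nil]; exact Ident_refl _
  | .mk [], .mk (g' :: gs'), _, _, hG, _ => by
      rw [Ident_iff] at hG
      obtain ⟨_, h, -⟩ := hG.2 g' (by simp)
      simp at h
  | .mk (g :: gs), .mk [], _, _, hG, _ => by
      rw [Ident_iff] at hG
      obtain ⟨_, h, -⟩ := hG.1 g (by simp)
      simp at h
  | .mk (g :: gs), .mk (g' :: gs'), .mk [], .mk [], hG, _ => by
      rw [split_nil', split_nil']; exact hG
  | .mk (g :: gs), .mk (g' :: gs'), .mk [], .mk (h' :: hs'), _, hH => by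
      rw [Ident_iff] at hH
      obtain ⟨_, h, -⟩ := hH.2 h' (by simp)
      simp at h
  | .mk (g :: gs), .mk (g' :: gs'), .mk (h :: hs), .mk [], _, hH => by
      rw [Ident_iff] at hH
      obtain ⟨_, h, -⟩ := hH.1 h (by simp)
      simp at h
  | .mk (g :: gs), .mk (g' :: gs'), .mk (h :: hs), .mk (h' :: hs'), hG, hH => by
      rw [split_def, split_def, Ident_iff]
      rw [Ident_iff] at hG hH
      constructor
      · intro x hx
        rcases List.mem_append.mp hx with hx | hx
        · obtain ⟨h0, hh0, rfl⟩ := List.mem_map.mp hx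
          obtain ⟨h0', hh0', hi⟩ := hH.1 h0 hh0
          have k1 := IGame.sizeOf_lt_of_mem hh0
          have k2 := IGame.sizeOf_lt_of_mem hh0'
          refine ⟨split (.mk (g' :: gs')) h0',
            List.mem_append.mpr (.inl (List.mem_map.mpr ⟨h0', hh0', rfl⟩)), ?_⟩
          exact Ident_split _ _ _ _ ((Ident_iff _ _).mpr hG) hi
        · obtain ⟨g0, hg0, rfl⟩ := List.mem_map.mp hx
          obtain ⟨g0', hg0', hi⟩ := hG.1 g0 hg0
          have k1 := IGame.sizeOf_lt_of_mem hg0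
          have k2 := IGame.sizeOf_lt_of_mem hg0'
          refine ⟨split g0' (.mk (h' :: hs')),
            List.mem_append.mpr (.inr (List.mem_map.mpr ⟨g0', hg0', rfl⟩)), ?_⟩
          exact Ident_split _ _ _ _ hi ((Ident_iff _ _).mpr hH)
      · intro x hx
        rcases List.mem_append.mp hx with hx | hx
        · obtain ⟨h0', hh0', rfl⟩ := List.mem_map.mp hx
          obtain ⟨h0, hh0, hi⟩ := hH.2 h0' hh0'
          have k1 := IGame.sizeOf_lt_of_mem hh0
          have k2 := IGame.sizeOf_lt_of_mem hh0'
          refine ⟨split (.mk (g :: gs)) h0,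
            List.mem_append.mpr (.inl (List.mem_map.mpr ⟨h0, hh0, rfl⟩)), ?_⟩
          exact Ident_split _ _ _ _ ((Ident_iff _ _).mpr hG) hi
        · obtain ⟨g0', hg0', rfl⟩ := List.mem_map.mp hx
          obtain ⟨g0, hg0, hi⟩ := hG.2 g0' hg0'
          have k1 := IGame.sizeOf_lt_of_mem hg0
          have k2 := IGame.sizeOf_lt_of_mem hg0'
          refine ⟨split g0 (.mk (h :: hs)),
            List.mem_append.mpr (.inr (List.mem_map.mpr ⟨g0, hg0, rfl⟩)), ?_⟩
          exact Ident_split _ _ _ _ hi ((Ident_iff _ _).mpr hH)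
termination_by G G' H H' => sizeOf G + sizeOf G' + sizeOf H + sizeOf H'
decreasing_by all_goals omega

lemma split_def' (gs hs : List IGame) (hg : gs ≠ []) (hh : hs ≠ []) :
    split (.mk gs) (.mk hs) =
    .mk (hs.map (split (.mk gs)) ++ gs.map (split · (.mk hs))) := by
  match gs, hs, hg, hh with
  | g :: gs, h :: hs, _, _ => exact split_def g gs h hs

lemma add_nil_left : ∀ K : IGame, Ident (addG (.mk []) K) K
  | .mk ks => by
    rw [addG_def, Ident_iff]
    simp only [List.map_nil, List.nil_append]
    constructor
    · intro x hx
      obtain ⟨k, hk, rfl⟩ := List.mem_map.mp hx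
      have key := IGame.sizeOf_lt_of_mem hk
      exact ⟨k, hk, add_nil_left k⟩
    · intro k hk
      have key := IGame.sizeOf_lt_of_mem hk
      exact ⟨addG (.mk []) k, List.mem_map_of_mem hk, add_nil_left k⟩
termination_by K => sizeOf K
decreasing_by all_goals omega

lemma add_nil_right : ∀ K : IGame, Ident (addG K (.mk [])) K
  | .mk ks => by
    rw [addG_def, Ident_iff]
    simp only [List.map_nil, List.append_nil]
    constructor
    · intro x hx
      obtain ⟨k, hk, rfl⟩ := List.mem_map.mp hx
      have key := IGame.sizeOf_lt_of_mem hk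
      exact ⟨k, hk, add_nil_right k⟩
    · intro k hk
      have key := IGame.sizeOf_lt_of_mem hk
      exact ⟨addG k (.mk []), List.mem_map.mpr ⟨k, hk, rfl⟩, add_nil_right k⟩
termination_by K => sizeOf K
decreasing_by all_goals omega

lemma split_split : ∀ G H K : IGame, Ident (split (split G H) K) (split G (addG H K))
  | .mk [], H, K => by
    simp only [split_nil]; exact Ident_refl _
  | .mk (g :: gs), .mk [], .mk [] => by
    rw [addG_def]
    simp only [List.map_nil, List.nil_append, split_E]
    exact Ident_refl _
  | .mk (g :: gs), .mk [], .mk (k :: ks) => by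
    rw [split_nil']
    exact Ident_split _ _ _ _ (Ident_refl _) (Ident_symm _ _ (add_nil_left _))
  | .mk (g :: gs), .mk (h :: hs), .mk [] => by
    rw [split_E]
    exact Ident_split _ _ _ _ (Ident_refl _) (Ident_symm _ _ (add_nil_right _))
  | .mk (g :: gs), .mk (h :: hs), .mk (k :: ks) => by
    have hGH : split (.mk (g :: gs)) (.mk (h :: hs)) =
        .mk ((h :: hs).map (split (.mk (g :: gs))) ++
             (g :: gs).map (split · (.mk (h :: hs)))) := split_def _ _ _ _
    have hM : addG (.mk (h :: hs)) (.mk (k :: ks)) =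
        .mk ((h :: hs).map (addG · (.mk (k :: ks))) ++
             (k :: ks).map (addG (.mk (h :: hs)))) := addG_def _ _
    rw [hGH, hM, split_def' _ _ (by simp) (by simp), split_def' _ _ (by simp) (by simp),
      Ident_iff]
    constructor
    · intro x hx
      rcases List.mem_append.mp hx with hx | hx
      · obtain ⟨k0, hk0, rfl⟩ := List.mem_map.mp hx
        have key := IGame.sizeOf_lt_of_mem hk0
        refine ⟨split (.mk (g :: gs)) (addG (.mk (h :: hs)) k0),
          List.mem_append.mpr (.inl (List.mem_map.mpr ⟨addG (.mk (h :: hs)) k0,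
            List.mem_append.mpr (.inr (List.mem_map_of_mem hk0)), rfl⟩)), ?_⟩
        rw [← hGH]
        exact split_split _ _ k0
      · obtain ⟨y, hy, rfl⟩ := List.mem_map.mp hx
        rcases List.mem_append.mp hy with hy' | hy'
        · obtain ⟨h0, hh0, rfl⟩ := List.mem_map.mp hy'
          have key := IGame.sizeOf_lt_of_mem hh0
          exact ⟨split (.mk (g :: gs)) (addG h0 (.mk (k :: ks))),
            List.mem_append.mpr (.inl (List.mem_map.mpr ⟨addG h0 (.mk (k :: ks)),
              List.mem_append.mpr (.inl (List.mem_map.mpr ⟨h0, hh0, rfl⟩)), rfl⟩)),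
            split_split _ h0 _⟩
        · obtain ⟨g0, hg0, rfl⟩ := List.mem_map.mp hy'
          have key := IGame.sizeOf_lt_of_mem hg0
          refine ⟨split g0 (addG (.mk (h :: hs)) (.mk (k :: ks))), ?_, split_split g0 _ _⟩
          rw [hM]
          exact List.mem_append.mpr (.inr (List.mem_map.mpr ⟨g0, hg0, rfl⟩))
    · intro x hx
      rcases List.mem_append.mp hx with hx | hx
      · obtain ⟨m, hm, rfl⟩ := List.mem_map.mp hx
        rcases List.mem_append.mp hm with hm' | hm'
        · obtain ⟨h0, hh0, rfl⟩ := List.mem_map.mp hm'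
          have key := IGame.sizeOf_lt_of_mem hh0
          exact ⟨split (split (.mk (g :: gs)) h0) (.mk (k :: ks)),
            List.mem_append.mpr (.inr (List.mem_map.mpr ⟨split (.mk (g :: gs)) h0,
              List.mem_append.mpr (.inl (List.mem_map.mpr ⟨h0, hh0, rfl⟩)), rfl⟩)),
            split_split _ h0 _⟩
        · obtain ⟨k0, hk0, rfl⟩ := List.mem_map.mp hm'
          have key := IGame.sizeOf_lt_of_mem hk0
          refine ⟨_, List.mem_append.mpr (.inl (List.mem_map.mpr ⟨k0, hk0, rfl⟩)), ?_⟩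
          rw [← hGH]
          exact split_split _ _ k0
      · obtain ⟨g0, hg0, rfl⟩ := List.mem_map.mp hx
        have key := IGame.sizeOf_lt_of_mem hg0
        refine ⟨split (split g0 (.mk (h :: hs))) (.mk (k :: ks)),
          List.mem_append.mpr (.inr (List.mem_map.mpr ⟨split g0 (.mk (h :: hs)),
            List.mem_append.mpr (.inr (List.mem_map.mpr ⟨g0, hg0, rfl⟩)), rfl⟩)), ?_⟩
        rw [← hM]
        exact split_split g0 _ _
termination_by G H K => sizeOf G + sizeOf H + sizeOf K
decreasing_by all_goals omega

lemma PPos_addG_of_Ident : ∀ (G H : IGame), Ident G H → PPos (addG G H)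
  | .mk gs, .mk hs, hI => by
    rw [Ident_iff] at hI
    rw [addG_def, PPos_iff]
    intro x hx
    rcases List.mem_append.mp hx with hx | hx
    · obtain ⟨g0, hg0, rfl⟩ := List.mem_map.mp hx
      obtain ⟨h0, hh0, hi⟩ := hI.1 g0 hg0
      have k1 := IGame.sizeOf_lt_of_mem hg0
      have k2 := IGame.sizeOf_lt_of_mem hh0
      obtain ⟨gl⟩ := g0
      rw [addG_def, PPos_iff]
      intro hP
      exact hP (addG (.mk gl) h0)
        (List.mem_append.mpr (.inr (List.mem_map_of_mem hh0)))
        (PPos_addG_of_Ident _ _ hi)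
    · obtain ⟨h0, hh0, rfl⟩ := List.mem_map.mp hx
      obtain ⟨g0, hg0, hi⟩ := hI.2 h0 hh0
      have k1 := IGame.sizeOf_lt_of_mem hg0
      have k2 := IGame.sizeOf_lt_of_mem hh0
      obtain ⟨hl⟩ := h0
      rw [addG_def, PPos_iff]
      intro hP
      exact hP (addG g0 (.mk hl))
        (List.mem_append.mpr (.inl (List.mem_map.mpr ⟨g0, hg0, rfl⟩)))
        (PPos_addG_of_Ident _ _ hi)
termination_by G H => sizeOf G + sizeOf H
decreasing_by all_goals omega

/-- `(G ∘ H) ∘ K = G ∘ (H + K)`, i.e. their disjunctive sum is a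
P-position. -/
theorem split_split_eq_split_add (G H K : IGame) :
    PPos (addG (split (split G H) K) (split G (addG H K))) := by
  exact PPos_addG_of_Ident _ _ (split_split G H K)
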